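/- Let F be a non-archimedean local field with ring of integers o and residue cardinality q. Let E/F be an unramified quadratic extension with ring of integers O and normalized valuation v_E. Write O_r = o + ϖ^r O. For ℓ ≥ 0, the set O_r^{(ℓ)} := {e ∈ O_r : v_E(e) = ℓ} equals ϖ_E^ℓ O^× if ℓ ≥ r, equals ϖ_E^ℓ O_{r−ℓ}^× if ℓ < r, where ϖ_E is a uniformizer of E (which may be taken equal to ϖ since E/F is unramified). -/

import Mathlib

/-- The order `o + c·O` inside a ring `O`, for a subring `o` and an element `c`. -/
def orderSubring {O : Type*} [CommRing O] (o : Subring O) (c : O) : Subring O where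
  carrier := {x : O | ∃ y ∈ o, ∃ z : O, x = y + c * z}
  zero_mem' := ⟨0, o.zero_mem, 0, by ring⟩
  one_mem' := ⟨1, o.one_mem, 0, by ring⟩
  add_mem' := by
    intro x y hx hy
    obtain ⟨u, hu, z, rfl⟩ := hx
    obtain ⟨u', hu', z', rfl⟩ := hy
    exact ⟨u + u', o.add_mem hu hu', z + z', by ring⟩
  neg_mem' := by
    intro x hx
    obtain ⟨u, hu, z, rfl⟩ := hx
    exact ⟨-u, o.neg_mem hu, -z, by ring⟩
  mul_mem' := by
    intro x y hx hy
    obtain ⟨u, hu, z, rfl⟩ := hx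
    obtain ⟨u', hu', z', rfl⟩ := hy
    exact ⟨u * u', o.mul_mem hu hu', u * z' + u' * z + c * z * z', by ring⟩

/-- For an unramified quadratic extension (encoded via rings of integers `o ⊆ O` with a
common uniformizer `ϖ`), the elements of the order `O_r = o + ϖ^r O` of valuation `ℓ`
are `ϖ^ℓ O^×` if `ℓ ≥ r` and `ϖ^ℓ O_{r-ℓ}^×` if `ℓ < r`. -/
theorem stmt_3 (O : Type*) [CommRing O] [IsDomain O] [IsDiscreteValuationRing O]
    (o : Subring O) [IsDomain o] [IsDiscreteValuationRing o]
    (ϖ : o) (hϖo : Irreducible ϖ) (hϖO : Irreducible (ϖ : O))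
    (θ : O) (hgen : ∀ x : O, ∃ c d : o, x = (c : O) + (d : O) * θ)
    (q : ℕ) (hq1 : 1 < q) (hqo : Nat.card (o ⧸ Ideal.span {ϖ}) = q)
    (hqO : Nat.card (O ⧸ Ideal.span {(ϖ : O)}) = q ^ 2)
    (r ℓ : ℕ) :
    (r ≤ ℓ →
      {e : O | e ∈ orderSubring o ((ϖ : O) ^ r) ∧ ∃ u : Oˣ, e = (ϖ : O) ^ ℓ * u}
        = {e : O | ∃ u : Oˣ, e = (ϖ : O) ^ ℓ * u}) ∧
    (ℓ < r →
      {e : O | e ∈ orderSubring o ((ϖ : O) ^ r) ∧ ∃ u : Oˣ, e = (ϖ : O) ^ ℓ * u}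
        = {e : O | ∃ x : (orderSubring o ((ϖ : O) ^ (r - ℓ))), IsUnit x ∧
            e = (ϖ : O) ^ ℓ * (x : O)}) := by
  have hϖ0 : (ϖ : O) ≠ 0 := hϖO.ne_zero
  constructor
  · intro hrℓ
    ext e
    simp only [Set.mem_setOf_eq]
    constructor
    · rintro ⟨-, h⟩; exact h
    · rintro ⟨u, rfl⟩
      refine ⟨⟨0, o.zero_mem, (ϖ : O) ^ (ℓ - r) * u, ?_⟩, ⟨u, rfl⟩⟩
      rw [zero_add, ← mul_assoc, ← pow_add, Nat.add_sub_cancel' hrℓ]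
  · intro hℓr
    set s := r - ℓ with hs
    have hsr : ℓ + s = r := Nat.add_sub_cancel' hℓr.le
    have hs0 : 0 < s := Nat.sub_pos_of_lt hℓr
    ext e
    simp only [Set.mem_setOf_eq]
    constructor
    · rintro ⟨⟨y, hy, z, hez⟩, u, rfl⟩
      -- y ≠ 0
      have hy0 : y ≠ 0 := by
        rintro rfl
        rw [zero_add, ← hsr, pow_add, mul_assoc] at hez
        have hcan : (u : O) = (ϖ : O) ^ s * z :=
          mul_left_cancel₀ (pow_ne_zero ℓ hϖ0) hez
        have : (ϖ : O) ∣ (u : O) := by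
          rw [hcan]
          exact Dvd.dvd.mul_right (dvd_pow_self _ hs0.ne') z
        exact hϖO.not_isUnit (isUnit_of_dvd_unit this u.isUnit)
      have hy0' : (⟨y, hy⟩ : o) ≠ 0 := by
        intro h
        exact hy0 (congrArg Subtype.val h)
      obtain ⟨n, w, hw⟩ :=
        IsDiscreteValuationRing.eq_unit_mul_pow_irreducible hy0' hϖo
      have hwO : y = ((w : o) : O) * (ϖ : O) ^ n := by
        have := congrArg (Subtype.val) hw
        push_cast at this
        exact this
      have hwu : IsUnit ((w : o) : O) := w.isUnit.map o.subtype
      have heq : (ϖ : O) ^ ℓ * u = ((w : o) : O) * (ϖ : O) ^ n + (ϖ : O) ^ r * z := by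
        rw [← hwO]; exact hez
      -- n = ℓ
      have hnℓ : n = ℓ := by
        by_contra hne
        rcases Nat.lt_or_ge n ℓ with hlt | hge
        · -- ϖ^(n+1) divides both sides except the w term
          have h1 : (ϖ : O) ^ (n + 1) ∣ ((w : o) : O) * (ϖ : O) ^ n := by
            have hd1 : (ϖ : O) ^ (n + 1) ∣ (ϖ : O) ^ ℓ * u :=
              Dvd.dvd.mul_right (pow_dvd_pow _ (by omega)) _
            have hd2 : (ϖ : O) ^ (n + 1) ∣ (ϖ : O) ^ r * z :=
              Dvd.dvd.mul_right (pow_dvd_pow _ (by omega)) _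
            have : ((w : o) : O) * (ϖ : O) ^ n
                = (ϖ : O) ^ ℓ * u - (ϖ : O) ^ r * z := by
              rw [heq]; ring
            rw [this]
            exact dvd_sub hd1 hd2
          obtain ⟨c, hc⟩ := h1
          have : ((w : o) : O) = (ϖ : O) * c := by
            apply mul_left_cancel₀ (pow_ne_zero n hϖ0)
            rw [show ((ϖ : O) ^ n) * (((w : o)) : O) = ((w : o) : O) * (ϖ : O) ^ n by ring,
              hc, pow_succ]
            ring
          have : (ϖ : O) ∣ ((w : o) : O) := ⟨c, this⟩
          exact hϖO.not_isUnit (isUnit_of_dvd_unit this hwu)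
        · have hlt : ℓ < n := lt_of_le_of_ne hge (Ne.symm hne)
          have hd1 : (ϖ : O) ^ (ℓ + 1) ∣ ((w : o) : O) * (ϖ : O) ^ n :=
            Dvd.dvd.mul_left (pow_dvd_pow _ (by omega)) _
          have hd2 : (ϖ : O) ^ (ℓ + 1) ∣ (ϖ : O) ^ r * z :=
            Dvd.dvd.mul_right (pow_dvd_pow _ (by omega)) _
          have h1 : (ϖ : O) ^ (ℓ + 1) ∣ (ϖ : O) ^ ℓ * u := by
            rw [heq]; exact dvd_add hd1 hd2
          obtain ⟨c, hc⟩ := h1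
          have : (u : O) = (ϖ : O) * c := by
            apply mul_left_cancel₀ (pow_ne_zero ℓ hϖ0)
            rw [hc, pow_succ]; ring
          have : (ϖ : O) ∣ (u : O) := ⟨c, this⟩
          exact hϖO.not_isUnit (isUnit_of_dvd_unit this u.isUnit)
      rw [hnℓ] at heq
      -- cancel ϖ^ℓ
      have hu : (u : O) = ((w : o) : O) + (ϖ : O) ^ s * z := by
        apply mul_left_cancel₀ (pow_ne_zero ℓ hϖ0)
        rw [heq, ← hsr, pow_add]; ring
      -- build the unit of the order
      have hw1 : ((w : o) : O) * (((w⁻¹ : oˣ) : o) : O) = 1 := by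
        have h1 : ((w : o) * ((w⁻¹ : oˣ) : o) : o) = 1 := by
          rw [← Units.val_mul, mul_inv_cancel, Units.val_one]
        calc ((w : o) : O) * (((w⁻¹ : oˣ) : o) : O)
            = (((w : o) * ((w⁻¹ : oˣ) : o) : o) : O) := by push_cast; ring
          _ = 1 := by rw [h1]; rfl
      have hu1 : (u : O) * ((u⁻¹ : Oˣ) : O) = 1 := u.mul_inv
      set Wi : O := (((w⁻¹ : oˣ) : o) : O)
      set XiVal : O := Wi + (ϖ : O) ^ s * (-(Wi * z * ((u⁻¹ : Oˣ) : O))) with hXiVal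
      have key : (u : O) * XiVal = 1 := by
        rw [hXiVal]
        linear_combination Wi * hu + hw1 - (ϖ : O) ^ s * Wi * z * hu1
      set S := orderSubring o ((ϖ : O) ^ s)
      have hXmem : (u : O) ∈ S := ⟨((w : o) : O), SetLike.coe_mem _, z, hu⟩
      have hXimem : XiVal ∈ S :=
        ⟨Wi, SetLike.coe_mem _, -(Wi * z * ((u⁻¹ : Oˣ) : O)), rfl⟩
      refine ⟨⟨(u : O), hXmem⟩, ?_, rfl⟩
      refine ⟨⟨⟨(u : O), hXmem⟩, ⟨XiVal, hXimem⟩, ?_, ?_⟩, rfl⟩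
      · exact Subtype.ext key
      · exact Subtype.ext (by show XiVal * (u : O) = 1; rw [mul_comm]; exact key)
    · rintro ⟨x, hxu, rfl⟩
      obtain ⟨y, hy, z, hxz⟩ := x.2
      constructor
      · refine ⟨(ϖ : O) ^ ℓ * y, ?_, z, ?_⟩
        · have : ((ϖ ^ ℓ : o) : O) * y ∈ o :=
            o.mul_mem (SetLike.coe_mem _) hy
          simpa using this
        · rw [hxz, ← hsr, pow_add]; ring
      · obtain ⟨u, hu⟩ := hxu.map (orderSubring o ((ϖ : O) ^ s)).subtype
        exact ⟨u, by rw [hu]; rfl⟩
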